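/- Let K be a number field, ℓ a prime number, and G a torsion-free finitely generated subgroup of K^× of rank r > 0. If (d_1,…,d_r,h_1,…,h_r) expresses the ℓ-divisibility of G in K, then for all sufficiently large integers n, the quotient G/(G ∩ (K^×)^{ℓ^n}) is isomorphic to the direct sum over i = 1,…,r of ℤ/ℓ^{n-d_i}ℤ. In particular, the multiset {d_1,…,d_r} is uniquely determined by K, ℓ and G, and for all sufficiently large n the minimal number of generators of G/(G ∩ (K^×)^{ℓ^n}) equals r. -/

import Mathlib

open NumberField IsDedekindDomain IntermediateField

set_option synthInstance.maxHeartbeats 1000000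
set_option maxHeartbeats 1000000

noncomputable section

/-- A fixed algebraic closure of `K`. -/
abbrev Kbar (K : Type) [Field K] := AlgebraicClosure K

/-- The cyclotomic extension `K(ζ_m)` of `K` inside `Kbar K`,
obtained by adjoining all `m`-th roots of unity. -/
def cyclo (K : Type) [Field K] (m : ℕ) : IntermediateField K (Kbar K) :=
  IntermediateField.adjoin K {x : Kbar K | x ^ m = 1}

/-- The field `K(ζ_m)(n-th roots of G)`: the smallest extension of `K` inside `Kbar K`
containing all `m`-th roots of unity and all `n`-th roots of every element of `G`. -/
def cycloKummer (K : Type) [Field K] (G : Subgroup Kˣ) (m n : ℕ) :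
    IntermediateField K (Kbar K) :=
  IntermediateField.adjoin K
    ({x : Kbar K | x ^ m = 1} ∪
      {x : Kbar K | ∃ g ∈ G, x ^ n = algebraMap K (Kbar K) (g : K)})

/-- A prime `v` of `K` is good for `G` if every element of `G` is a `v`-adic unit,
i.e. the reduction of `G` modulo `v` is well-defined and does not contain `0`. -/
def GoodPrime (K : Type) [Field K] [NumberField K] (G : Subgroup Kˣ)
    (v : HeightOneSpectrum (𝓞 K)) : Prop :=
  ∀ g ∈ G, ∃ a b : 𝓞 K, a ∉ v.asIdeal ∧ b ∉ v.asIdeal ∧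
    (g : K) * algebraMap (𝓞 K) K b = algebraMap (𝓞 K) K a

/-- The reduction of `G` modulo `v`, as a subset of the residue field at `v`. -/
def reductionSet (K : Type) [Field K] [NumberField K] (G : Subgroup Kˣ)
    (v : HeightOneSpectrum (𝓞 K)) : Set ((𝓞 K) ⧸ v.asIdeal) :=
  {y | ∃ g ∈ G, ∃ a b : 𝓞 K, b ∉ v.asIdeal ∧
    (g : K) * algebraMap (𝓞 K) K b = algebraMap (𝓞 K) K a ∧
    y * Ideal.Quotient.mk v.asIdeal b = Ideal.Quotient.mk v.asIdeal a}

/-- The set `S` of primes of `K` has natural density `dens`. -/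
def HasDensity (K : Type) [Field K] [NumberField K]
    (S : Set (HeightOneSpectrum (𝓞 K))) (dens : ℝ) : Prop :=
  Filter.Tendsto (fun N : ℕ =>
      (Nat.card {v : HeightOneSpectrum (𝓞 K) //
          v ∈ S ∧ Nat.card ((𝓞 K) ⧸ v.asIdeal) ≤ N} : ℝ) /
      (Nat.card {v : HeightOneSpectrum (𝓞 K) //
          Nat.card ((𝓞 K) ⧸ v.asIdeal) ≤ N} : ℝ))
    Filter.atTop (nhds dens)

/-- The set of (good) primes of `K` such that the reduction of `G` has size coprime to `ℓ`. -/
def CoprimeRed (K : Type) [Field K] [NumberField K] (ℓ : ℕ) (G : Subgroup Kˣ) :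
    Set (HeightOneSpectrum (𝓞 K)) :=
  {v | GoodPrime K G v ∧ ¬ ℓ ∣ Nat.card (reductionSet K G v)}

/-- `a ∈ Lˣ` is strongly `ℓ`-indivisible: there is no root of unity `ζ ∈ L` of
`ℓ`-power order such that `aζ` is an `ℓ`-th power in `Lˣ`. -/
def StronglyIndiv (L : Type) [Field L] (ℓ : ℕ) (a : Lˣ) : Prop :=
  ¬ ∃ (ζ b : Lˣ) (k : ℕ), ζ ^ ℓ ^ k = 1 ∧ a * ζ = b ^ ℓ

/-- `B 0, …, B (r-1)` are strongly `ℓ`-independent elements of `Lˣ`. -/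
def StronglyIndep (L : Type) [Field L] (ℓ : ℕ) {r : ℕ} (B : Fin r → Lˣ) : Prop :=
  ∀ x : Fin r → ℤ, (∃ i, ¬ (ℓ : ℤ) ∣ x i) → StronglyIndiv L ℓ (∏ i, B i ^ x i)

/-- The tuple `(d, h)` expresses the `ℓ`-divisibility of `G` in `K`. -/
def ExpressesDiv (K : Type) [Field K] (ℓ : ℕ) (G : Subgroup Kˣ) {r : ℕ}
    (d h : Fin r → ℕ) : Prop :=
  ∃ B ζ : Fin r → Kˣ, StronglyIndep K ℓ B ∧ (∀ i, orderOf (ζ i) = ℓ ^ h i) ∧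
    G = Subgroup.closure (Set.range fun i => B i ^ ℓ ^ d i * ζ i)

end


section AuxStmt14

variable {K : Type} [Field K]

lemma key_dvd {ℓ : ℕ} {r : ℕ} {B : Fin r → Kˣ}
    (hB : StronglyIndep K ℓ B) :
    ∀ (m : ℕ) (y : Fin r → ℤ) (ζ c : Kˣ) (k : ℕ), ζ ^ ℓ ^ k = 1 →
      (∏ i, B i ^ y i) * ζ = c ^ ℓ ^ m → ∀ i, (ℓ : ℤ) ^ m ∣ y i := by
  intro m
  induction m with
  | zero => intro y ζ c k hζ heq i; simpa using one_dvd _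
  | succ m ih =>
    intro y ζ c k hζ heq
    have heq' : (∏ i, B i ^ y i) * ζ = (c ^ ℓ ^ m) ^ ℓ := by
      rw [heq, ← pow_mul, ← pow_succ]
    have hdvd : ∀ i, (ℓ : ℤ) ∣ y i := by
      by_contra hcon
      push_neg at hcon
      obtain ⟨i, hi⟩ := hcon
      exact hB y ⟨i, hi⟩ ⟨ζ, c ^ ℓ ^ m, k, hζ, heq'⟩
    choose y' hy' using hdvd
    have hprod : (∏ i, B i ^ y i) = (∏ i, B i ^ y' i) ^ ℓ := by
      rw [← Finset.prod_pow]
      refine Finset.prod_congr rfl fun i _ => ?_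
      rw [hy' i, mul_comm, zpow_mul, zpow_natCast]
    set P := ∏ i, B i ^ y' i with hP
    set w := P⁻¹ * c ^ ℓ ^ m with hw
    have hwl : w ^ ℓ = ζ := by
      have : P ^ ℓ * ζ = (c ^ ℓ ^ m) ^ ℓ := by rw [← hprod]; exact heq'
      rw [hw, mul_pow, inv_pow, ← this, inv_mul_cancel_left]
    have hwk : w ^ ℓ ^ (k + 1) = 1 := by
      rw [pow_succ, mul_comm (ℓ ^ k), pow_mul, hwl, hζ]
    have hm : P * w = c ^ ℓ ^ m := by
      rw [hw, ← mul_assoc, mul_inv_cancel, one_mul]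
    intro i
    have := ih y' w c (k + 1) hwk hm i
    rw [hy' i, pow_succ, mul_comm ((ℓ:ℤ) ^ m) (ℓ:ℤ)]
    exact mul_dvd_mul_left _ this


lemma pow_mem_iff {ℓ r : ℕ} (hℓ : ℓ.Prime) {B ζ : Fin r → Kˣ} {d h : Fin r → ℕ}
    (hB : StronglyIndep K ℓ B)
    (hζ : ∀ i, orderOf (ζ i) = ℓ ^ h i) {n : ℕ} (hn : ∀ i, d i + h i ≤ n)
    (x : Fin r → ℤ) :
    (∃ c : Kˣ, c ^ ℓ ^ n = ∏ i, (B i ^ ℓ ^ d i * ζ i) ^ x i) ↔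
      ∀ i, (ℓ : ℤ) ^ (n - d i) ∣ x i := by
  have hζpow : ∀ i, ζ i ^ ℓ ^ h i = 1 := fun i => by rw [← hζ i]; exact pow_orderOf_eq_one _
  have hsplit : (∏ i, (B i ^ ℓ ^ d i * ζ i) ^ x i) =
      (∏ i, B i ^ ((ℓ : ℤ) ^ d i * x i)) * ∏ i, ζ i ^ x i := by
    rw [← Finset.prod_mul_distrib]
    refine Finset.prod_congr rfl fun i _ => ?_
    rw [mul_zpow]
    congr 1
    rw [zpow_mul, ← zpow_natCast (B i) (ℓ ^ d i)]
    push_cast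
    ring_nf
  constructor
  · rintro ⟨c, hc⟩
    have hzord : (∏ i, ζ i ^ x i) ^ ℓ ^ (Finset.univ.sup h) = 1 := by
      rw [← Finset.prod_pow]
      refine Finset.prod_eq_one fun i _ => ?_
      have h1 : ζ i ^ ℓ ^ (Finset.univ.sup h) = 1 := by
        rw [← Nat.add_sub_cancel' (Finset.le_sup (Finset.mem_univ i) : h i ≤ Finset.univ.sup h),
          pow_add, pow_mul, hζpow i, one_pow]
      rw [← zpow_natCast, ← zpow_mul, mul_comm, zpow_mul, zpow_natCast, h1, one_zpow]
    have := key_dvd hB n (fun i => (ℓ : ℤ) ^ d i * x i) (∏ i, ζ i ^ x i) c (Finset.univ.sup h) hzord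
      (by rw [← hsplit, ← hc])
    intro i
    have hdn : (ℓ : ℤ) ^ d i * (ℓ : ℤ) ^ (n - d i) ∣ (ℓ : ℤ) ^ d i * x i := by
      rw [← pow_add, ← Nat.add_sub_assoc (le_trans (Nat.le_add_right _ _) (hn i)) (d i),
        Nat.add_sub_cancel_left]
      exact this i
    exact (mul_dvd_mul_iff_left (pow_ne_zero (d i) (Int.natCast_ne_zero.mpr hℓ.ne_zero))).mp hdn
  · intro hx
    choose t ht using hx
    refine ⟨∏ i, B i ^ t i, ?_⟩
    rw [hsplit]
    have hz1 : (∏ i, ζ i ^ x i) = 1 := by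
      refine Finset.prod_eq_one fun i _ => ?_
      have hord : ζ i ^ ((ℓ : ℕ) ^ (n - d i)) = 1 := by
        have hd : ℓ ^ h i ∣ ℓ ^ (n - d i) :=
          pow_dvd_pow _ (Nat.le_sub_of_add_le (by rw [Nat.add_comm]; exact hn i))
        exact orderOf_dvd_iff_pow_eq_one.mp (by rw [hζ i]; exact hd)
      rw [ht i, zpow_mul, ← Nat.cast_pow, zpow_natCast, hord, one_zpow]
    rw [hz1, mul_one, ← Finset.prod_pow]
    refine Finset.prod_congr rfl fun i _ => ?_
    rw [← zpow_natCast (B i ^ t i) (ℓ ^ n), ← zpow_mul, ht i]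
    congr 1
    push_cast
    rw [← mul_assoc, ← pow_add,
      Nat.add_sub_cancel' (show d i ≤ n from le_trans (Nat.le_add_right _ _) (hn i))]
    ring


/-- The exponent homomorphism attached to a family `g`. -/
def expHom {r : ℕ} (g : Fin r → Kˣ) : Multiplicative (Fin r → ℤ) →* Kˣ where
  toFun x := ∏ i, g i ^ (Multiplicative.toAdd x i)
  map_one' := by simp
  map_mul' x y := by
    simp only [toAdd_mul, Pi.add_apply, zpow_add]
    rw [Finset.prod_mul_distrib]

lemma expHom_single {r : ℕ} (g : Fin r → Kˣ) (i : Fin r) :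
    expHom g (Multiplicative.ofAdd (Pi.single i 1)) = g i := by
  simp only [expHom, MonoidHom.coe_mk, OneHom.coe_mk, toAdd_ofAdd]
  rw [Fintype.prod_eq_single i fun j hj => by rw [Pi.single_eq_of_ne hj, zpow_zero]]
  rw [Pi.single_eq_same, zpow_one]

lemma closure_range_eq {r : ℕ} (g : Fin r → Kˣ) :
    Subgroup.closure (Set.range g) = (expHom g).range := by
  apply le_antisymm
  · rw [Subgroup.closure_le]
    rintro _ ⟨i, rfl⟩
    exact MonoidHom.mem_range.mpr ⟨Multiplicative.ofAdd (Pi.single i 1), expHom_single g i⟩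
  · rintro u ⟨x, rfl⟩
    show (∏ i, g i ^ (Multiplicative.toAdd x i)) ∈ _
    exact Subgroup.prod_mem _ fun i _ =>
      Subgroup.zpow_mem _ (Subgroup.subset_closure (Set.mem_range_self i)) _

/-- The reduction homomorphism to the product of `ZMod`s. -/
def chi (ℓ : ℕ) {r : ℕ} (a : Fin r → ℕ) :
    Multiplicative (Fin r → ℤ) →* ∀ i, Multiplicative (ZMod (ℓ ^ a i)) where
  toFun x i := Multiplicative.ofAdd ((Multiplicative.toAdd x i : ℤ) : ZMod (ℓ ^ a i))
  map_one' := by funext i; simp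
  map_mul' x y := by funext i; simp [← ofAdd_add]

lemma chi_surjective (ℓ : ℕ) {r : ℕ} (a : Fin r → ℕ) :
    Function.Surjective (chi ℓ a) := by
  intro y
  have : ∀ i, ∃ z : ℤ, ((z : ℤ) : ZMod (ℓ ^ a i)) = Multiplicative.toAdd (y i) :=
    fun i => ZMod.intCast_surjective _
  choose z hz using this
  refine ⟨Multiplicative.ofAdd z, ?_⟩
  funext i
  simp only [chi, MonoidHom.coe_mk, OneHom.coe_mk, toAdd_ofAdd]
  rw [hz i]
  simp

lemma chi_eq_one_iff (ℓ : ℕ) (hℓ : ℓ.Prime) {r : ℕ} (a : Fin r → ℕ)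
    (x : Multiplicative (Fin r → ℤ)) :
    chi ℓ a x = 1 ↔ ∀ i, (ℓ : ℤ) ^ a i ∣ Multiplicative.toAdd x i := by
  rw [funext_iff]
  refine forall_congr' fun i => ?_
  haveI : NeZero (ℓ ^ a i) := ⟨pow_ne_zero _ hℓ.ne_zero⟩
  rw [show (1 : ∀ i, Multiplicative (ZMod (ℓ ^ a i))) i = Multiplicative.ofAdd 0 from rfl]
  simp only [chi, MonoidHom.coe_mk, OneHom.coe_mk]
  rw [Multiplicative.ofAdd.apply_eq_iff_eq, ZMod.intCast_zmod_eq_zero_iff_dvd]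
  push_cast
  rfl

theorem main_construction (ℓ : ℕ) (hℓ : ℓ.Prime) (G : Subgroup Kˣ) {r : ℕ}
    (d h : Fin r → ℕ) (hdh : ExpressesDiv K ℓ G d h) (n : ℕ) (hn : ∀ i, d i + h i ≤ n) :
    ∃ f : Multiplicative (Fin r → ℤ) →*
        (↥G ⧸ ((powMonoidHom (ℓ ^ n) : Kˣ →* Kˣ).range.subgroupOf G)),
      Function.Surjective f ∧
      Nonempty ((↥G ⧸ ((powMonoidHom (ℓ ^ n) : Kˣ →* Kˣ).range.subgroupOf G)) ≃*
        ((i : Fin r) → Multiplicative (ZMod (ℓ ^ (n - d i))))) := by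
  obtain ⟨B, ζ, hB, hζ, hG⟩ := hdh
  set g : Fin r → Kˣ := fun i => B i ^ ℓ ^ d i * ζ i with hg
  have hmem : ∀ x, expHom g x ∈ G := by
    intro x
    rw [hG, closure_range_eq]
    exact ⟨x, rfl⟩
  set π : Multiplicative (Fin r → ℤ) →* G :=
    (expHom g).codRestrict G hmem with hπ
  have hπs : Function.Surjective π := by
    rintro ⟨u, hu⟩
    rw [hG, closure_range_eq] at hu
    obtain ⟨x, hx⟩ := hu
    exact ⟨x, Subtype.ext hx⟩
  set H := ((powMonoidHom (ℓ ^ n) : Kˣ →* Kˣ).range.subgroupOf G) with hH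
  set θ : Multiplicative (Fin r → ℤ) →* (↥G ⧸ H) := (QuotientGroup.mk' H).comp π with hθ
  have hθs : Function.Surjective θ := (QuotientGroup.mk'_surjective H).comp hπs
  refine ⟨θ, hθs, ?_⟩
  have hker : θ.ker = (chi ℓ (fun i => n - d i)).ker := by
    ext x
    rw [MonoidHom.mem_ker, MonoidHom.mem_ker, chi_eq_one_iff ℓ hℓ]
    rw [hθ, MonoidHom.comp_apply, QuotientGroup.mk'_apply, QuotientGroup.eq_one_iff]
    rw [hH, Subgroup.mem_subgroupOf]
    show ((expHom g x : Kˣ) ∈ (powMonoidHom (ℓ ^ n) : Kˣ →* Kˣ).range) ↔ _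
    rw [MonoidHom.mem_range]
    simp only [powMonoidHom_apply]
    exact pow_mem_iff hℓ hB hζ hn _
  exact ⟨((QuotientGroup.quotientKerEquivOfSurjective θ hθs).symm.trans
    (QuotientGroup.quotientMulEquivOfEq hker)).trans
    (QuotientGroup.quotientKerEquivOfSurjective _ (chi_surjective ℓ _))⟩


section Gen
variable {Q : Type} [CommGroup Q] {r : ℕ}

lemma ofAdd_eq_prod (x : Multiplicative (Fin r → ℤ)) :
    x = ∏ i, (Multiplicative.ofAdd (Pi.single i (1:ℤ))) ^ (Multiplicative.toAdd x i) := by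
  apply Multiplicative.toAdd.injective
  rw [toAdd_prod]
  have : ∀ i, Multiplicative.toAdd ((Multiplicative.ofAdd ((Pi.single i (1:ℤ)) : Fin r → ℤ)) ^
      (Multiplicative.toAdd x i)) = ((Pi.single i (Multiplicative.toAdd x i)) : Fin r → ℤ) := by
    intro i
    rw [toAdd_zpow, toAdd_ofAdd]
    funext j
    by_cases hij : j = i
    · subst hij; simp
    · simp [Pi.single_eq_of_ne hij]
  rw [Finset.sum_congr rfl fun i _ => this i, Finset.univ_sum_single]

lemma exists_gen (f : Multiplicative (Fin r → ℤ) →* Q) (hf : Function.Surjective f) :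
    ∃ S : Finset Q, Subgroup.closure (S : Set Q) = ⊤ ∧ S.card ≤ r := by
  classical
  refine ⟨Finset.image (fun i => f (Multiplicative.ofAdd (Pi.single i 1))) Finset.univ,
    ?_, le_trans (Finset.card_image_le) (by simp)⟩
  rw [eq_top_iff]
  intro q _
  obtain ⟨x, rfl⟩ := hf q
  rw [ofAdd_eq_prod x, map_prod]
  refine Subgroup.prod_mem _ fun i _ => ?_
  rw [map_zpow]
  refine Subgroup.zpow_mem _ (Subgroup.subset_closure ?_) _
  simp only [Finset.coe_image, Finset.coe_univ, Set.image_univ]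
  exact Set.mem_range_self i

end Gen

section Lower

lemma gen_lower {ℓ : ℕ} (hℓ : ℓ.Prime) {r : ℕ} (a : Fin r → ℕ) (ha : ∀ i, 1 ≤ a i)
    {Q : Type} [Group Q] (e : Q ≃* ∀ i, Multiplicative (ZMod (ℓ ^ a i)))
    (S : Finset Q) (hS : Subgroup.closure (S : Set Q) = ⊤) : r ≤ S.card := by
  haveI := Fact.mk hℓ
  classical
  -- the reduction hom to (Fin r → ZMod ℓ)
  set ρ₀ : (∀ i, Multiplicative (ZMod (ℓ ^ a i))) →* Multiplicative (Fin r → ZMod ℓ) :=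
    { toFun := fun x => Multiplicative.ofAdd fun i =>
        ZMod.castHom (dvd_pow_self ℓ (Nat.one_le_iff_ne_zero.mp (ha i))) (ZMod ℓ)
          (Multiplicative.toAdd (x i))
      map_one' := by
        apply Multiplicative.toAdd.injective
        funext i; simp
      map_mul' := fun x y => by
        apply Multiplicative.toAdd.injective
        funext i
        simp [Pi.mul_apply, toAdd_mul, map_add, ← ofAdd_add] } with hρ₀
  set ρ : Q →* Multiplicative (Fin r → ZMod ℓ) := ρ₀.comp e.toMonoidHom with hρdef
  have hρs : Function.Surjective ρ := by
    apply Function.Surjective.comp (g := ρ₀)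
    · intro y
      refine ⟨fun i => Multiplicative.ofAdd ((Multiplicative.toAdd y i).val :
        ZMod (ℓ ^ a i)), ?_⟩
      apply Multiplicative.toAdd.injective
      funext i
      haveI : NeZero (ℓ ^ a i) := ⟨pow_ne_zero _ hℓ.ne_zero⟩
      simp only [hρ₀, MonoidHom.coe_mk, OneHom.coe_mk, toAdd_ofAdd]
      rw [map_natCast]
      exact ZMod.natCast_rightInverse _
    · exact e.surjective
  -- push the generators forward
  have hcl : Subgroup.closure ((S.image ρ : Finset _) : Set (Multiplicative (Fin r → ZMod ℓ)))
      = ⊤ := by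
    rw [Finset.coe_image, ← MonoidHom.map_closure, hS, Subgroup.map_top_of_surjective ρ hρs]
  -- now linear algebra over ZMod ℓ
  set T : Finset (Fin r → ZMod ℓ) := (S.image ρ).image (fun q => Multiplicative.toAdd q)
    with hT
  have hspan : Submodule.span (ZMod ℓ) (T : Set (Fin r → ZMod ℓ)) = ⊤ := by
    rw [eq_top_iff]
    intro v _
    have hv : Multiplicative.ofAdd v ∈ Subgroup.closure
        ((S.image ρ : Finset _) : Set (Multiplicative (Fin r → ZMod ℓ))) := by
      rw [hcl]; trivial
    refine Subgroup.closure_induction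
      (p := fun z _ => Multiplicative.toAdd z ∈ Submodule.span (ZMod ℓ) (T : Set (Fin r → ZMod ℓ)))
      ?_ ?_ ?_ ?_ hv
    · intro z hz
      have hzT : Multiplicative.toAdd z ∈ T :=
        Finset.mem_image_of_mem _ (Finset.mem_coe.mp hz)
      exact Submodule.subset_span (Finset.mem_coe.mpr hzT)
    · exact Submodule.zero_mem _
    · intro z w _ _ hz hw; exact Submodule.add_mem _ hz hw
    · intro z _ hz; exact Submodule.neg_mem _ hz
  have h1 : r ≤ T.card := by
    have := finrank_span_finset_le_card (R := ZMod ℓ) T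
    rw [Set.finrank, hspan, finrank_top] at this
    rw [Module.finrank_pi (ZMod ℓ)] at this
    simpa using this
  calc r ≤ T.card := h1
    _ ≤ (S.image ρ).card := Finset.card_image_le
    _ ≤ S.card := Finset.card_image_le

end Lower


lemma gcd_pow_pow (ℓ a k : ℕ) : Nat.gcd (ℓ ^ a) (ℓ ^ k) = ℓ ^ min a k := by
  rcases le_total a k with hak | hka
  · rw [Nat.gcd_eq_left (pow_dvd_pow _ hak), min_eq_left hak]
  · rw [Nat.gcd_eq_right (pow_dvd_pow _ hka), min_eq_right hka]

lemma card_torsion_zmod {ℓ : ℕ} (hℓ : ℓ.Prime) (a k : ℕ) :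
    Nat.card {y : Multiplicative (ZMod (ℓ ^ a)) | y ^ ℓ ^ k = 1} = ℓ ^ min a k := by
  haveI : NeZero (ℓ ^ a) := ⟨pow_ne_zero _ hℓ.ne_zero⟩
  set m := ℓ ^ a with hm
  set s := ℓ ^ k with hs
  set f : ZMod m →+ ZMod m := AddMonoidHom.mk' (fun x => (s : ZMod m) * x)
    (fun x y => by ring) with hf
  -- the torsion set is the kernel of f
  have hequiv : {y : Multiplicative (ZMod m) | y ^ s = 1} ≃ f.ker := by
    refine Equiv.subtypeEquiv Multiplicative.toAdd fun y => ?_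
    rw [Set.mem_setOf_eq, AddMonoidHom.mem_ker]
    constructor
    · intro hy
      have := congrArg Multiplicative.toAdd hy
      rw [toAdd_pow, toAdd_one] at this
      rw [hf]
      show (s : ZMod m) * Multiplicative.toAdd y = 0
      rw [← nsmul_eq_mul]
      exact this
    · intro hy
      apply Multiplicative.toAdd.injective
      rw [toAdd_pow, toAdd_one, nsmul_eq_mul]
      exact hy
  -- the range of f is the zmultiples of (s : ZMod m)
  have hrange : f.range = AddSubgroup.zmultiples ((s : ℕ) : ZMod m) := by
    ext z
    constructor
    · rintro ⟨x, rfl⟩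
      obtain ⟨w, rfl⟩ := ZMod.intCast_surjective x
      refine ⟨w, ?_⟩
      show w • ((s : ℕ) : ZMod m) = (s : ZMod m) * (w : ZMod m)
      rw [zsmul_eq_mul, mul_comm]
    · rintro ⟨w, rfl⟩
      refine ⟨(w : ZMod m), ?_⟩
      show (s : ZMod m) * (w : ZMod m) = w • ((s : ℕ) : ZMod m)
      rw [zsmul_eq_mul, mul_comm]
  have hcardrange : Nat.card f.range = ℓ ^ (a - min a k) := by
    rw [hrange, Nat.card_zmultiples, ZMod.addOrderOf_coe s (NeZero.ne m), hm, hs,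
      gcd_pow_pow, Nat.pow_div (min_le_left a k) hℓ.pos]
  have hcardm : Nat.card (ZMod m) = ℓ ^ a := by rw [Nat.card_zmod]
  have hsplit := AddSubgroup.card_eq_card_quotient_mul_card_addSubgroup (f.ker)
  have hq : Nat.card (ZMod m ⧸ f.ker) = Nat.card f.range :=
    Nat.card_congr (QuotientAddGroup.quotientKerEquivRange f).toEquiv
  rw [hcardm, hq, hcardrange] at hsplit
  rw [Nat.card_congr hequiv]
  have hle : min a k ≤ a := min_le_left a k
  have hpos : 0 < ℓ ^ (a - min a k) := pow_pos hℓ.pos _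
  have : ℓ ^ (a - min a k) * ℓ ^ min a k = ℓ ^ (a - min a k) * Nat.card f.ker := by
    rw [← pow_add, Nat.sub_add_cancel hle, ← hsplit]
  exact (Nat.eq_of_mul_eq_mul_left hpos this).symm

lemma card_torsion_pi {ℓ : ℕ} (hℓ : ℓ.Prime) {r : ℕ} (a : Fin r → ℕ) (k : ℕ) :
    Nat.card {x : ∀ i, Multiplicative (ZMod (ℓ ^ a i)) | x ^ ℓ ^ k = 1} =
      ℓ ^ (∑ i, min (a i) k) := by
  have hequiv : {x : ∀ i, Multiplicative (ZMod (ℓ ^ a i)) | x ^ ℓ ^ k = 1} ≃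
      ∀ i, {y : Multiplicative (ZMod (ℓ ^ a i)) | y ^ ℓ ^ k = 1} := by
    refine (Equiv.subtypeEquiv (Equiv.refl _) fun x => ?_).trans
      (Equiv.subtypePiEquivPi (p := fun i (y : Multiplicative (ZMod (ℓ ^ a i))) => y ^ ℓ ^ k = 1))
    rw [Set.mem_setOf_eq, Equiv.refl_apply, funext_iff]
    exact forall_congr' fun i => Iff.rfl
  rw [Nat.card_congr hequiv, Nat.card_pi, Finset.prod_congr rfl
    (fun i _ => card_torsion_zmod hℓ (a i) k), ← Finset.prod_pow_eq_pow_sum]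

lemma card_torsion_congr {Q₁ Q₂ : Type} [Group Q₁] [Group Q₂] (e : Q₁ ≃* Q₂) (s : ℕ) :
    Nat.card {x : Q₁ | x ^ s = 1} = Nat.card {x : Q₂ | x ^ s = 1} := by
  refine Nat.card_congr (Equiv.subtypeEquiv e.toEquiv fun x => ?_)
  show x ^ s = 1 ↔ e x ^ s = 1
  rw [← map_pow]
  exact ⟨fun hx => by rw [hx, map_one], fun hx => e.injective (by rw [hx, map_one])⟩


lemma sum_min_succ {r : ℕ} (a : Fin r → ℕ) (k : ℕ) :
    ∑ i, min (a i) (k + 1) = (∑ i, min (a i) k) +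
      (Finset.univ.filter (fun i => k + 1 ≤ a i)).card := by
  have hpt : ∀ i : Fin r, min (a i) (k+1) = min (a i) k + (if k + 1 ≤ a i then 1 else 0) := by
    intro i; split <;> omega
  rw [Finset.sum_congr rfl fun i _ => hpt i, Finset.sum_add_distrib]
  congr 1
  simp [Finset.sum_boole]

lemma multiset_eq_of_min_sums {r : ℕ} (a a' : Fin r → ℕ)
    (hsum : ∀ k, ∑ i, min (a i) k = ∑ i, min (a' i) k) :
    Multiset.map a Finset.univ.val = Multiset.map a' Finset.univ.val := by
  classical
  have hD : ∀ j, (Finset.univ.filter (fun i => j ≤ a i)).card =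
      (Finset.univ.filter (fun i => j ≤ a' i)).card := by
    intro j
    cases j with
    | zero => simp
    | succ k =>
      have h1 := sum_min_succ a k
      have h2 := sum_min_succ a' k
      rw [hsum k, hsum (k+1)] at h1
      omega
  have hcount : ∀ (b : Fin r → ℕ) (c : ℕ),
      (Finset.univ.filter (fun i => c = b i)).card +
      (Finset.univ.filter (fun i => c + 1 ≤ b i)).card =
      (Finset.univ.filter (fun i => c ≤ b i)).card := by
    intro b c
    rw [← Finset.card_union_of_disjoint (by
      rw [Finset.disjoint_filter]
      intro i _ h1
      omega)]
    congr 1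
    ext i
    simp only [Finset.mem_union, Finset.mem_filter, Finset.mem_univ, true_and]
    omega
  ext c
  rw [Multiset.count_map, Multiset.count_map]
  have key : ∀ b : Fin r → ℕ, Multiset.card (Multiset.filter (fun i => c = b i) Finset.univ.val) =
      (Finset.univ.filter (fun i => c = b i)).card := by
    intro b
    rw [← Finset.filter_val]
    rfl
  rw [key a, key a']
  have h1 := hcount a c
  have h2 := hcount a' c
  have h3 := hD c
  have h4 := hD (c + 1)
  omega


end AuxStmt14

/-- if `(d, h)` expresses the `ℓ`-divisibility of `G` in `K`, then for all
sufficiently large `n` we have `G/(G ∩ (Kˣ)^{ℓ^n}) ≅ ⊕_i ℤ/ℓ^{n - d i}ℤ`; the multiset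
of the `d i` is uniquely determined by `(K, ℓ, G)`; and for all sufficiently large `n`
the minimal number of generators of `G/(G ∩ (Kˣ)^{ℓ^n})` equals `r`. -/
theorem stmt14 (K : Type) [Field K] [NumberField K] (ℓ : ℕ) (hℓ : ℓ.Prime)
    (G : Subgroup Kˣ) (r : ℕ) (hr : 0 < r)
    (hfree : Nonempty (↥G ≃* Multiplicative (Fin r → ℤ)))
    (d h : Fin r → ℕ) (hdh : ExpressesDiv K ℓ G d h) :
    (∃ N : ℕ, ∀ n : ℕ, N ≤ n →
      Nonempty ((↥G ⧸ ((powMonoidHom (ℓ ^ n) : Kˣ →* Kˣ).range.subgroupOf G)) ≃*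
        ((i : Fin r) → Multiplicative (ZMod (ℓ ^ (n - d i)))))) ∧
    (∀ d' h' : Fin r → ℕ, ExpressesDiv K ℓ G d' h' →
      Multiset.map d Finset.univ.val = Multiset.map d' Finset.univ.val) ∧
    (∃ N : ℕ, ∀ n : ℕ, N ≤ n →
      (∃ S : Finset (↥G ⧸ ((powMonoidHom (ℓ ^ n) : Kˣ →* Kˣ).range.subgroupOf G)),
          Subgroup.closure (S : Set (↥G ⧸ ((powMonoidHom (ℓ ^ n) : Kˣ →* Kˣ).range.subgroupOf G))) = ⊤ ∧
          S.card = r) ∧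
        ∀ S : Finset (↥G ⧸ ((powMonoidHom (ℓ ^ n) : Kˣ →* Kˣ).range.subgroupOf G)),
          Subgroup.closure (S : Set (↥G ⧸ ((powMonoidHom (ℓ ^ n) : Kˣ →* Kˣ).range.subgroupOf G))) = ⊤ →
          r ≤ S.card) := by
    classical
  obtain ⟨N1, hN1⟩ : ∃ N1 : ℕ, ∀ i, d i + h i + 1 ≤ N1 :=
    ⟨(Finset.univ.sup fun i => d i + h i) + 1, fun i =>
      Nat.succ_le_succ (Finset.le_sup (f := fun i => d i + h i) (Finset.mem_univ i))⟩
  have hmain : ∀ n : ℕ, N1 ≤ n →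
      ∃ f : Multiplicative (Fin r → ℤ) →*
          (↥G ⧸ ((powMonoidHom (ℓ ^ n) : Kˣ →* Kˣ).range.subgroupOf G)),
        Function.Surjective f ∧
        Nonempty ((↥G ⧸ ((powMonoidHom (ℓ ^ n) : Kˣ →* Kˣ).range.subgroupOf G)) ≃*
          ((i : Fin r) → Multiplicative (ZMod (ℓ ^ (n - d i))))) := by
    intro n hn
    exact main_construction ℓ hℓ G d h hdh n (fun i => by have := hN1 i; omega)
  refine ⟨⟨N1, fun n hn => by obtain ⟨f, _, hiso⟩ := hmain n hn; exact hiso⟩, ?_, ?_⟩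
  · intro d' h' hdh'
    obtain ⟨N1', hN1'⟩ : ∃ N1' : ℕ, ∀ i, d' i + h' i + 1 ≤ N1' :=
      ⟨(Finset.univ.sup fun i => d' i + h' i) + 1, fun i =>
        Nat.succ_le_succ (Finset.le_sup (f := fun i => d' i + h' i) (Finset.mem_univ i))⟩
    set n := max N1 N1' with hndef
    obtain ⟨f1, hf1, ⟨e1⟩⟩ := hmain n (le_max_left _ _)
    obtain ⟨f2, hf2, ⟨e2⟩⟩ := main_construction ℓ hℓ G d' h' hdh' n
      (fun i => by have := hN1' i; have := le_max_right N1 N1'; omega)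
    have hsums : ∀ k, ∑ i, min (n - d i) k = ∑ i, min (n - d' i) k := by
      intro k
      apply Nat.pow_right_injective hℓ.two_le
      show (ℓ:ℕ) ^ (∑ i, min (n - d i) k) = ℓ ^ (∑ i, min (n - d' i) k)
      rw [← card_torsion_pi hℓ (fun i => n - d i) k, ← card_torsion_pi hℓ (fun i => n - d' i) k,
        ← card_torsion_congr e1 (ℓ ^ k), ← card_torsion_congr e2 (ℓ ^ k)]
    have hm := multiset_eq_of_min_sums _ _ hsums
    have e1' : Multiset.map d Finset.univ.val =
        Multiset.map (fun x => n - x) (Multiset.map (fun i => n - d i) Finset.univ.val) := by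
      rw [Multiset.map_map]
      refine (Multiset.map_congr rfl fun i _ => ?_).symm
      simp only [Function.comp_apply]
      have := hN1 i; have := le_max_left N1 N1'
      omega
    have e2' : Multiset.map d' Finset.univ.val =
        Multiset.map (fun x => n - x) (Multiset.map (fun i => n - d' i) Finset.univ.val) := by
      rw [Multiset.map_map]
      refine (Multiset.map_congr rfl fun i _ => ?_).symm
      simp only [Function.comp_apply]
      have := hN1' i; have := le_max_right N1 N1'
      omega
    rw [e1', e2', hm]
  · refine ⟨N1, fun n hn => ?_⟩
    obtain ⟨f, hfs, ⟨iso⟩⟩ := hmain n hn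
    have hlow : ∀ S : Finset (↥G ⧸ ((powMonoidHom (ℓ ^ n) : Kˣ →* Kˣ).range.subgroupOf G)),
        Subgroup.closure (S : Set (↥G ⧸ ((powMonoidHom (ℓ ^ n) : Kˣ →* Kˣ).range.subgroupOf G))) = ⊤ → r ≤ S.card := by
      intro S hS
      exact gen_lower hℓ (fun i => n - d i) (fun i => show 1 ≤ n - d i by have := hN1 i; omega) iso S hS
    obtain ⟨S, hScl, hSle⟩ := @exists_gen _ (QuotientGroup.Quotient.commGroup _) r f hfs
    exact ⟨⟨S, hScl, le_antisymm hSle (hlow S hScl)⟩, hlow⟩
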